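/- arXiv:2008.08043 — 4 statements merged into one kernel-verified Lean document; each statement's English description precedes it below -/
import Mathlib

section
/- Let γ > 0, k > 0, h > 0 be real numbers with kγ < 2 and k/h² < γ/4, set r = k/h, and let θ be a real number with sin θ ≠ 0. Then both complex roots μ of the quadratic equation μ² + (γk − 2)μ + (1 − kγ + 4 r² sin²θ) = 0 have modulus |μ| < 1. -/
private lemma aux_real_root (b c x : ℝ) (h1 : x * x + b * x + c = 0)
    (hb0 : b < 0) (hb2 : -2 < b)
    (key1 : (0:ℝ) < 1 + b + c) (key2 : (0:ℝ) < 1 - b + c) :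
    x ^ 2 < 1 := by
  have hx1 : x < 1 := by
    by_contra hx
    push_neg at hx
    have hf : (0:ℝ) ≤ (x - 1) * (x + 1 + b) :=
      mul_nonneg (by linarith) (by linarith)
    nlinarith
  have hx2 : -1 < x := by
    by_contra hx
    push_neg at hx
    have hf : (0:ℝ) ≤ (-(x + 1)) * (-(x - 1 + b)) :=
      mul_nonneg (by linarith) (by linarith)
    nlinarith
  nlinarith

/-- Stability of the explicit FD-(0,1) scheme (Proposition 3.1, scalar form):
under the stability conditions `kγ < 2` and `k/h² < γ/4`, both complex roots of
the characteristic equation `μ² + (γk − 2)μ + (1 − kγ + 4 r² sin²θ) = 0`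
(with `r = k/h`, `sin θ ≠ 0`) have modulus strictly less than 1. -/
theorem explicit_scheme_roots_in_unit_disc (γ k h θ : ℝ)
    (hγ : 0 < γ) (hk : 0 < k) (hh : 0 < h)
    (hkγ : k * γ < 2) (hkh : k / h ^ 2 < γ / 4)
    (hθ : Real.sin θ ≠ 0) :
    ∀ μ : ℂ,
      μ ^ 2 + ((γ * k - 2 : ℝ) : ℂ) * μ
          + ((1 - k * γ + 4 * (k / h) ^ 2 * Real.sin θ ^ 2 : ℝ) : ℂ) = 0 →
        ‖μ‖ < 1 := by
  intro μ hμ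
  set b : ℝ := γ * k - 2 with hb
  set c : ℝ := 1 - k * γ + 4 * (k / h) ^ 2 * Real.sin θ ^ 2 with hc
  have hs : 0 < Real.sin θ ^ 2 := by positivity
  have hs1 : Real.sin θ ^ 2 ≤ 1 := Real.sin_sq_le_one θ
  have hr : 4 * (k / h) ^ 2 * Real.sin θ ^ 2 < k * γ := by
    have h1 : 4 * (k / h) ^ 2 * Real.sin θ ^ 2 ≤ 4 * (k / h) ^ 2 := by
      nlinarith [sq_nonneg (k / h)]
    have h2 : 4 * (k / h) ^ 2 < k * γ := by
      have he : (k / h) ^ 2 = k * (k / h ^ 2) := by field_simp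
      rw [he]
      nlinarith
    linarith
  have hcpos : 0 < 4 * (k / h) ^ 2 * Real.sin θ ^ 2 := by positivity
  have hc1 : c < 1 := by rw [hc]; linarith
  have hbneg : b < 0 := by rw [hb]; nlinarith
  have hbgt : -2 < b := by rw [hb]; nlinarith
  have key1 : (0:ℝ) < 1 + b + c := by rw [hb, hc]; nlinarith
  have key2 : (0:ℝ) < 1 - b + c := by rw [hb, hc]; nlinarith
  -- extract real and imaginary parts
  rw [Complex.ext_iff] at hμ
  obtain ⟨h1, h2⟩ := hμ
  simp [pow_two, Complex.mul_re, Complex.mul_im, Complex.add_re, Complex.add_im] at h1 h2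
  set x : ℝ := μ.re
  set y : ℝ := μ.im
  have habs : ‖μ‖ ^ 2 = x ^ 2 + y ^ 2 := by
    rw [Complex.sq_norm, Complex.normSq_apply]; ring
  have hgoal : x ^ 2 + y ^ 2 < 1 := by
    rcases eq_or_ne y 0 with hy | hy
    · have h1' : x * x + b * x + c = 0 := by rw [hy] at h1; linarith
      have := aux_real_root b c x h1' hbneg hbgt key1 key2
      rw [hy]
      linarith
    · have hx : x = -b / 2 := by
        have hz : y * (2 * x + b) = 0 := by linear_combination h2
        rcases mul_eq_zero.mp hz with hz' | hz'
        · exact absurd hz' hy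
        · linarith
      have hxy : x ^ 2 + y ^ 2 = c := by
        rw [hx] at h1 ⊢
        linear_combination -h1
      linarith
  have h3 : ‖μ‖ ^ 2 < 1 := by rw [habs]; exact hgoal
  nlinarith [norm_nonneg μ]
end

section
/- Let N ≥ 2 be an integer, let A be the (N−1)×(N−1) real tridiagonal matrix with −2 on the diagonal and 1 on the sub- and super-diagonals, let h > 0, γ > 0, k > 0 be real numbers, and let M be the (2N−2)×(2N−2) complex block matrix M = [[0, I],[(1/h²)A, −γ I]]. If kγ < 2 and k/h² < γ/4, then every eigenvalue μ of the amplification matrix I + kM satisfies |μ| < 1. -/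
open Finset Complex


lemma quad_root_abs_lt_one {μ : ℂ} {c g : ℝ} (hg0 : 0 < g) (hg2 : g < 2)
    (hc0 : c < 0) (hcg : -g < c)
    (heq : (μ - 1) * (μ - 1 + (g : ℂ)) = (c : ℂ)) : ‖μ‖ < 1 := by
  rw [Complex.ext_iff] at heq
  simp [Complex.mul_re, Complex.mul_im] at heq
  obtain ⟨hre, him⟩ := heq
  have h2 : μ.im * (2 * μ.re - 2 + g) = 0 := by linear_combination him
  have key : Complex.normSq μ < 1 := by
    rw [Complex.normSq_apply]
    rcases mul_eq_zero.mp h2 with hy | hx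
    · rw [hy] at hre ⊢
      have h1 : μ.re - 1 < 0 := by nlinarith
      have h3 : 0 < μ.re - 1 + g := by nlinarith
      nlinarith
    · nlinarith
  have hsq := Complex.sq_norm μ
  nlinarith [norm_nonneg μ]

lemma eigvec_of_mem_spectrum {n : Type*} [Fintype n] [DecidableEq n] (B : Matrix n n ℂ) (μ : ℂ)
    (hμ : μ ∈ spectrum ℂ B) :
    ∃ w : n → ℂ, w ≠ 0 ∧ B.mulVec w = μ • w := by
  rw [spectrum.mem_iff, Matrix.isUnit_iff_isUnit_det, isUnit_iff_ne_zero, not_not,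
    ← Matrix.exists_mulVec_eq_zero_iff] at hμ
  obtain ⟨w, hw0, hw⟩ := hμ
  refine ⟨w, hw0, ?_⟩
  have h1 : ((algebraMap ℂ (Matrix n n ℂ)) μ).mulVec w - B.mulVec w = 0 := by
    rw [← Matrix.sub_mulVec]; exact hw
  have h2 : ((algebraMap ℂ (Matrix n n ℂ)) μ).mulVec w = μ • w := by
    rw [Algebra.algebraMap_eq_smul_one μ, Matrix.smul_mulVec, Matrix.one_mulVec]
  rw [h2, sub_eq_zero] at h1
  exact h1.symm

lemma sum_fin_indicator {n : ℕ} (u : Fin n → ℂ) (c : ℕ) :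
    (∑ j : Fin n, if (j : ℕ) = c then u j else 0) =
      if hc : c < n then u ⟨c, hc⟩ else 0 := by
  split_ifs with hc
  · rw [Finset.sum_eq_single (⟨c, hc⟩ : Fin n)]
    · simp
    · intro b _ hb
      rw [if_neg]
      intro hbc
      exact hb (Fin.ext hbc)
    · simp
  · apply Finset.sum_eq_zero
    intro j _
    rw [if_neg]
    omega

lemma row_formula {n : ℕ} (A : Matrix (Fin n) (Fin n) ℝ)
    (hA : ∀ i j : Fin n, A i j = if (i : ℕ) = (j : ℕ) then -2
      else if (i : ℕ) + 1 = (j : ℕ) ∨ (j : ℕ) + 1 = (i : ℕ) then 1 else 0)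
    (u : Fin n → ℂ) (i : Fin n) :
    ((A.map (fun x => (x : ℂ))).mulVec u) i =
      (if hc : (i : ℕ) + 1 < n then u ⟨(i : ℕ) + 1, hc⟩ else 0)
      + (if (i : ℕ) = 0 then 0 else
          (if hc : (i : ℕ) - 1 < n then u ⟨(i : ℕ) - 1, hc⟩ else 0))
      - 2 * u i := by
  have expand : ∀ j : Fin n, ((A i j : ℝ) : ℂ) * u j =
      (if (j : ℕ) = (i : ℕ) then -2 * u j else 0) +
      ((if (j : ℕ) = (i : ℕ) + 1 then u j else 0) +
       (if ¬((i : ℕ) = 0) ∧ (j : ℕ) = (i : ℕ) - 1 then u j else 0)) := by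
    intro j
    rw [hA]
    split_ifs <;> first | (exfalso; omega) | (push_cast; ring1)
  have step1 : ((A.map (fun x => (x : ℂ))).mulVec u) i
      = ∑ j : Fin n, ((A i j : ℝ) : ℂ) * u j := by
    simp [Matrix.mulVec, dotProduct, Matrix.map_apply]
  rw [step1, Finset.sum_congr rfl (fun j _ => expand j), Finset.sum_add_distrib,
    Finset.sum_add_distrib]
  have s1 : (∑ j : Fin n, if (j : ℕ) = (i : ℕ) then -2 * u j else 0) = -2 * u i := by
    rw [sum_fin_indicator (fun j => -2 * u j) (i : ℕ), dif_pos i.isLt]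
  have s2 : (∑ j : Fin n, if (j : ℕ) = (i : ℕ) + 1 then u j else 0)
      = (if hc : (i : ℕ) + 1 < n then u ⟨(i : ℕ) + 1, hc⟩ else 0) :=
    sum_fin_indicator u _
  have s3 : (∑ j : Fin n, if ¬((i : ℕ) = 0) ∧ (j : ℕ) = (i : ℕ) - 1 then u j else 0)
      = (if (i : ℕ) = 0 then 0 else
          (if hc : (i : ℕ) - 1 < n then u ⟨(i : ℕ) - 1, hc⟩ else 0)) := by
    by_cases hi0 : (i : ℕ) = 0
    · rw [if_pos hi0]
      apply Finset.sum_eq_zero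
      intro j _
      rw [if_neg]
      tauto
    · rw [if_neg hi0, ← sum_fin_indicator u ((i : ℕ) - 1)]
      apply Finset.sum_congr rfl
      intro j _
      by_cases hj : (j : ℕ) = (i : ℕ) - 1
      · rw [if_pos ⟨hi0, hj⟩, if_pos hj]
      · rw [if_neg (by tauto), if_neg hj]
  rw [s1, s2, s3]
  ring

lemma tridiag_bounds {n : ℕ} (hn : 1 ≤ n) (A : Matrix (Fin n) (Fin n) ℝ)
    (hA : ∀ i j : Fin n, A i j = if (i : ℕ) = (j : ℕ) then -2
      else if (i : ℕ) + 1 = (j : ℕ) ∨ (j : ℕ) + 1 = (i : ℕ) then 1 else 0)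
    (u : Fin n → ℂ) (hu : u ≠ 0) {a : ℂ}
    (hAu : (A.map (fun x => (x : ℂ))).mulVec u = a • u) :
    ∃ ar : ℝ, a = (ar : ℂ) ∧ -4 ≤ ar ∧ ar < 0 := by
  obtain ⟨p, rfl⟩ : ∃ p, n = p + 1 := ⟨n - 1, by omega⟩
  set W : ℕ → ℂ := fun m => if hm : m < p + 1 then u ⟨m, hm⟩ else 0 with hWdef
  have hWi : ∀ i : Fin (p + 1), W (i : ℕ) = u i := by
    intro i; simp only [hWdef]; rw [dif_pos i.isLt]
  have hWtop : W (p + 1) = 0 := by simp only [hWdef]; rw [dif_neg (by omega)]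
  have key : ∀ m, ∀ hm : m < p + 1,
      a * W m = W (m + 1) + (if m = 0 then 0 else W (m - 1)) - 2 * W m := by
    intro m hm
    have h1 := congrFun hAu ⟨m, hm⟩
    rw [row_formula A hA u ⟨m, hm⟩, Pi.smul_apply, smul_eq_mul] at h1
    simp only [hWdef]
    rw [dif_pos hm]
    rw [← h1]
  set T : ℝ := ∑ m ∈ Finset.range (p + 1), Complex.normSq (W m) with hTdef
  set S : ℂ := ∑ m ∈ Finset.range p, (starRingEnd ℂ) (W m) * W (m + 1) with hSdef
  set Sr : ℝ := S.re with hSrdef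
  have hT_pos : 0 < T := by
    obtain ⟨i, hi⟩ := Function.ne_iff.mp hu
    apply Finset.sum_pos' (fun m _ => Complex.normSq_nonneg _)
    exact ⟨(i : ℕ), Finset.mem_range.mpr i.isLt,
      by rw [hWi i]; exact Complex.normSq_pos.mpr hi⟩
  have e0 : (T : ℂ) = ∑ m ∈ Finset.range (p + 1), (starRingEnd ℂ) (W m) * W m := by
    rw [hTdef]
    push_cast
    exact Finset.sum_congr rfl fun m _ => Complex.normSq_eq_conj_mul_self
  have e1 : a * (T : ℂ)
      = ∑ m ∈ Finset.range (p + 1), (starRingEnd ℂ) (W m) * (a * W m) := by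
    rw [e0, Finset.mul_sum]
    exact Finset.sum_congr rfl fun m _ => by ring
  have e2' : ∀ m, m < p + 1 → (starRingEnd ℂ) (W m) * (a * W m)
      = (starRingEnd ℂ) (W m) * W (m + 1)
        + (starRingEnd ℂ) (W m) * (if m = 0 then 0 else W (m - 1))
        - 2 * ((starRingEnd ℂ) (W m) * W m) := by
    intro m hm
    rw [key m hm]
    ring
  have e2 : a * (T : ℂ) = (∑ m ∈ Finset.range (p + 1), (starRingEnd ℂ) (W m) * W (m + 1))
      + (∑ m ∈ Finset.range (p + 1),
          (starRingEnd ℂ) (W m) * (if m = 0 then 0 else W (m - 1)))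
      - 2 * (T : ℂ) := by
    rw [e1, Finset.sum_congr rfl (fun m hm => e2' m (Finset.mem_range.mp hm)),
      Finset.sum_sub_distrib, Finset.sum_add_distrib, ← Finset.mul_sum, ← e0]
  have e4 : (∑ m ∈ Finset.range (p + 1), (starRingEnd ℂ) (W m) * W (m + 1)) = S := by
    rw [Finset.sum_range_succ, hWtop, mul_zero, add_zero, hSdef]
  have e5 : (∑ m ∈ Finset.range (p + 1),
      (starRingEnd ℂ) (W m) * (if m = 0 then 0 else W (m - 1))) = (starRingEnd ℂ) S := by
    rw [Finset.sum_range_succ', hSdef, map_sum]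
    simp only [Nat.add_sub_cancel, Nat.succ_ne_zero, if_false, reduceIte, mul_zero, add_zero,
      map_mul, Complex.conj_conj]
    exact Finset.sum_congr rfl fun m _ => mul_comm _ _
  have hQ : a * (T : ℂ) = ((2 * Sr - 2 * T : ℝ) : ℂ) := by
    rw [e2, e4, e5, Complex.add_conj]
    push_cast
    ring
  have hTne : (T : ℝ) ≠ 0 := ne_of_gt hT_pos
  have ha : a = (((2 * Sr - 2 * T) / T : ℝ) : ℂ) := by
    have hTc : ((T : ℝ) : ℂ) ≠ 0 := by exact_mod_cast hTne
    field_simp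
    push_cast
    rw [eq_div_iff hTc, hQ]
    push_cast
    ring
  have hid1 : ∑ m ∈ Finset.range p, Complex.normSq (W m) = T - Complex.normSq (W p) := by
    rw [hTdef, Finset.sum_range_succ]
    ring
  have hid2 : ∑ m ∈ Finset.range p, Complex.normSq (W (m + 1)) = T - Complex.normSq (W 0) := by
    rw [hTdef, Finset.sum_range_succ' (fun m => Complex.normSq (W m)) p]
    ring
  have hSr : Sr = ∑ m ∈ Finset.range p, ((starRingEnd ℂ) (W m) * W (m + 1)).re := by
    rw [hSrdef, hSdef]
    exact Complex.re_sum _ _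
  have hlow : -T ≤ Sr := by
    have hterm : ∀ m ∈ Finset.range p,
        -((Complex.normSq (W m) + Complex.normSq (W (m + 1))) / 2)
          ≤ ((starRingEnd ℂ) (W m) * W (m + 1)).re := by
      intro m _
      have h0 := Complex.normSq_nonneg (W (m + 1) + W m)
      rw [Complex.normSq_add] at h0
      have hc : (W (m + 1) * (starRingEnd ℂ) (W m)).re
          = ((starRingEnd ℂ) (W m) * W (m + 1)).re := by rw [mul_comm]
      rw [hc] at h0
      linarith
    have hs := Finset.sum_le_sum hterm
    rw [← hSr] at hs
    have hrw : ∑ m ∈ Finset.range p,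
        -((Complex.normSq (W m) + Complex.normSq (W (m + 1))) / 2)
        = -((∑ m ∈ Finset.range p, Complex.normSq (W m))
            + (∑ m ∈ Finset.range p, Complex.normSq (W (m + 1)))) / 2 := by
      rw [Finset.sum_neg_distrib, ← Finset.sum_div, Finset.sum_add_distrib]
      ring
    rw [hrw, hid1, hid2] at hs
    have h1 := Complex.normSq_nonneg (W 0)
    have h2 := Complex.normSq_nonneg (W p)
    linarith
  have hident : ∑ m ∈ Finset.range p, Complex.normSq (W (m + 1) - W m)
      = (T - Complex.normSq (W 0)) + (T - Complex.normSq (W p)) - 2 * Sr := by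
    have hterm : ∀ m ∈ Finset.range p, Complex.normSq (W (m + 1) - W m)
        = Complex.normSq (W (m + 1)) + Complex.normSq (W m)
          - 2 * ((starRingEnd ℂ) (W m) * W (m + 1)).re := by
      intro m _
      rw [Complex.normSq_sub]
      rw [mul_comm (W (m + 1)) ((starRingEnd ℂ) (W m))]
    rw [Finset.sum_congr rfl hterm, Finset.sum_sub_distrib, Finset.sum_add_distrib,
      ← Finset.mul_sum, hid1, hid2, ← hSr]
  have hstrict : Sr < T := by
    by_contra hle
    push_neg at hle
    have h1 : (0 : ℝ) ≤ ∑ m ∈ Finset.range p, Complex.normSq (W (m + 1) - W m) :=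
      Finset.sum_nonneg fun m _ => Complex.normSq_nonneg _
    have h2 := Complex.normSq_nonneg (W 0)
    have h3 := Complex.normSq_nonneg (W p)
    have hW0 : Complex.normSq (W 0) = 0 := by linarith
    have hWsum0 : ∑ m ∈ Finset.range p, Complex.normSq (W (m + 1) - W m) = 0 := by linarith
    have hterm0 := (Finset.sum_eq_zero_iff_of_nonneg
      (fun m _ => Complex.normSq_nonneg (W (m + 1) - W m))).mp hWsum0
    have hall : ∀ m, m ≤ p → W m = 0 := by
      intro m
      induction m with
      | zero => exact fun _ => Complex.normSq_eq_zero.mp hW0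
      | succ q ih =>
        intro hq
        have h := hterm0 q (Finset.mem_range.mpr (by omega))
        have h' := sub_eq_zero.mp (Complex.normSq_eq_zero.mp h)
        rw [h']
        exact ih (by omega)
    obtain ⟨i, hi⟩ := Function.ne_iff.mp hu
    exact hi (by rw [← hWi i]; exact hall (i : ℕ) (by omega))
  refine ⟨(2 * Sr - 2 * T) / T, ha, ?_, ?_⟩
  · rw [le_div_iff₀ hT_pos]
    linarith
  · exact div_neg_of_neg_of_pos (by linarith) hT_pos

/-- Proposition 3.1 (stability of the explicit FD-(0,1) scheme, constant
damping): if `kγ < 2` and `k/h² < γ/4`, then every eigenvalue `μ` of the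
amplification matrix `I + kM`, where `M = [[0, I],[(1/h²)A, −γI]]` and `A` is
the tridiagonal discrete Laplacian, satisfies `|μ| < 1`. -/
theorem explicit_scheme_stable (N : ℕ) (hN : 2 ≤ N)
    (A : Matrix (Fin (N - 1)) (Fin (N - 1)) ℝ)
    (hA : ∀ i j : Fin (N - 1),
      A i j =
        if (i : ℕ) = (j : ℕ) then -2
        else if (i : ℕ) + 1 = (j : ℕ) ∨ (j : ℕ) + 1 = (i : ℕ) then 1
        else 0)
    (h γ k : ℝ) (hh : 0 < h) (hγ : 0 < γ) (hk : 0 < k)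
    (hkγ : k * γ < 2) (hkh : k / h ^ 2 < γ / 4)
    (M : Matrix (Fin (N - 1) ⊕ Fin (N - 1)) (Fin (N - 1) ⊕ Fin (N - 1)) ℂ)
    (hM : M = Matrix.fromBlocks 0 1
      (((1 / h ^ 2 : ℝ) : ℂ) • A.map (fun x => (x : ℂ))) (-(γ : ℂ) • 1)) :
    ∀ μ ∈ spectrum ℂ ((1 : Matrix (Fin (N - 1) ⊕ Fin (N - 1))
        (Fin (N - 1) ⊕ Fin (N - 1)) ℂ) + (k : ℂ) • M),
      ‖μ‖ < 1 := by
  intro μ hμ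
  have hn1 : 1 ≤ N - 1 := by omega
  have hk' : (k : ℂ) ≠ 0 := by exact_mod_cast hk.ne'
  have hh' : (h : ℂ) ≠ 0 := by exact_mod_cast hh.ne'
  obtain ⟨w, hw0, hw⟩ := eigvec_of_mem_spectrum _ μ hμ
  -- expand the eigenvector equation
  rw [Matrix.add_mulVec, Matrix.one_mulVec, Matrix.smul_mulVec, hM,
    Matrix.fromBlocks_mulVec] at hw
  simp only [Matrix.zero_mulVec, Matrix.one_mulVec, Matrix.smul_mulVec,
    Matrix.neg_mulVec, zero_add] at hw
  have E1 : ∀ i, w (Sum.inl i) + (k : ℂ) * w (Sum.inr i) = μ * w (Sum.inl i) := by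
    intro i
    have := congrFun hw (Sum.inl i)
    simpa using this
  have E2 : ∀ i, w (Sum.inr i) + (k : ℂ) * ((((h : ℂ) ^ 2)⁻¹ *
      ((A.map (fun x => (x : ℂ))).mulVec (w ∘ Sum.inl)) i)
      - (γ : ℂ) * w (Sum.inr i)) = μ * w (Sum.inr i) := by
    intro i
    have h2 := congrFun hw (Sum.inr i)
    simp at h2
    linear_combination h2
  have hune : (w ∘ Sum.inl) ≠ 0 := by
    intro h0
    apply hw0
    funext x
    cases x with
    | inl i => exact congrFun h0 i
    | inr i =>
      have e := E1 i
      have hz : w (Sum.inl i) = 0 := congrFun h0 i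
      rw [hz] at e
      have : (k : ℂ) * w (Sum.inr i) = 0 := by linear_combination e
      exact (mul_eq_zero.mp this).resolve_left hk'
  set a : ℂ := ((h : ℂ) ^ 2 / (k : ℂ) ^ 2) * ((μ - 1) * (μ - 1 + (k : ℂ) * (γ : ℂ)))
    with hadef
  have hAu : (A.map (fun x => (x : ℂ))).mulVec (w ∘ Sum.inl) = a • (w ∘ Sum.inl) := by
    funext i
    simp only [Pi.smul_apply, Function.comp_apply, smul_eq_mul]
    have e1 := E1 i
    have e2 := E2 i
    rw [hadef]
    field_simp
    field_simp at e2
    linear_combination ((h : ℂ) ^ 2 * ((μ : ℂ) - 1 + (k : ℂ) * (γ : ℂ))) * e1 + (k : ℂ) * e2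
  obtain ⟨ar, har, h4, hneg⟩ := tridiag_bounds hn1 A hA _ hune hAu
  have hH : (0 : ℝ) < h ^ 2 := by positivity
  have h1 : 4 * k < γ * h ^ 2 := by
    rw [div_lt_div_iff₀ hH (by norm_num : (0:ℝ) < 4)] at hkh
    linarith
  set c : ℝ := k ^ 2 * ar / h ^ 2 with hcdef
  have heq : (μ - 1) * (μ - 1 + ((k * γ : ℝ) : ℂ)) = ((c : ℝ) : ℂ) := by
    rw [hadef] at har
    rw [hcdef]
    push_cast
    field_simp at har ⊢
    linear_combination har
  have hc0 : c < 0 := by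
    rw [hcdef]
    apply div_neg_of_neg_of_pos _ hH
    nlinarith [mul_pos hk hk]
  have hcg : -(k * γ) < c := by
    rw [hcdef, lt_div_iff₀ hH]
    nlinarith
  exact quad_root_abs_lt_one (mul_pos hk hγ) hkγ hc0 hcg heq
end

section
/- Let N ≥ 2 be an integer, let A be the (N−1)×(N−1) real tridiagonal matrix with −2 on the diagonal and 1 on the sub- and super-diagonals, let h > 0 and γ ≥ 0 be real numbers, and let M be the (2N−2)×(2N−2) complex block matrix M = [[0, I],[(1/h²)A, −γ I]]. Then every eigenvalue λ of M satisfies Re λ ≤ 0. -/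
open scoped Matrix ComplexOrder

/-- The spectrum of the semidiscretized damped wave operator
`M = [[0, I],[(1/h²)A, −γI]]` (with `γ ≥ 0`) lies in the closed left
half-plane: every eigenvalue `λ` of `M` satisfies `Re λ ≤ 0`. -/
theorem semidiscrete_damped_wave_spectrum_left_halfplane (N : ℕ) (hN : 2 ≤ N)
    (A : Matrix (Fin (N - 1)) (Fin (N - 1)) ℝ)
    (hA : ∀ i j : Fin (N - 1),
      A i j =
        if (i : ℕ) = (j : ℕ) then -2
        else if (i : ℕ) + 1 = (j : ℕ) ∨ (j : ℕ) + 1 = (i : ℕ) then 1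
        else 0)
    (h γ : ℝ) (hh : 0 < h) (hγ : 0 ≤ γ)
    (M : Matrix (Fin (N - 1) ⊕ Fin (N - 1)) (Fin (N - 1) ⊕ Fin (N - 1)) ℂ)
    (hM : M = Matrix.fromBlocks 0 1
      (((1 / h ^ 2 : ℝ) : ℂ) • A.map (fun x => (x : ℂ))) (-(γ : ℂ) • 1)) :
    ∀ lam ∈ spectrum ℂ M, lam.re ≤ 0 := by
  intro lam hlam
  have hNe : Nonempty (Fin (N - 1)) := ⟨⟨0, by omega⟩⟩
  set A' : Matrix (Fin (N - 1)) (Fin (N - 1)) ℂ := A.map (fun x => (x : ℂ)) with hA'def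
  set B : Matrix (Fin (N - 1)) (Fin (N - 1)) ℂ := ((1 / h ^ 2 : ℝ) : ℂ) • A' with hBdef
  set d : ℂ := lam ^ 2 + (γ : ℂ) * lam with hd
  have hsymm : ∀ i j : Fin (N - 1), A i j = A j i := by
    intro i j
    rw [hA i j, hA j i]
    by_cases h1 : (i : ℕ) = (j : ℕ)
    · rw [if_pos h1, if_pos h1.symm]
    · rw [if_neg h1, if_neg (Ne.symm h1)]
      by_cases h2 : (i : ℕ) + 1 = (j : ℕ) ∨ (j : ℕ) + 1 = (i : ℕ)
      · rw [if_pos h2, if_pos h2.symm]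
      · rw [if_neg h2, if_neg (fun hc => h2 hc.symm)]
  -- obtain an eigenvector of M
  have hev : Module.End.HasEigenvalue (Matrix.toLin' M) lam := by
    have hEq : Matrix.toLin' M = Matrix.toLinAlgEquiv' M := rfl
    rw [hEq, Module.End.hasEigenvalue_iff_mem_spectrum,
      AlgEquiv.spectrum_eq Matrix.toLinAlgEquiv' M]
    exact hlam
  obtain ⟨v, hv⟩ := hev.exists_hasEigenvector
  have hv0 : v ≠ 0 := hv.right
  have heq : M *ᵥ v = lam • v := by
    have := hv.apply_eq_smul
    rwa [Matrix.toLin'_apply] at this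
  set u : Fin (N - 1) → ℂ := fun i => v (Sum.inl i) with hu
  set w : Fin (N - 1) → ℂ := fun i => v (Sum.inr i) with hwdef
  have hvelim : v = Sum.elim u w := by funext x; cases x <;> rfl
  rw [hM, hvelim, Matrix.fromBlocks_mulVec] at heq
  simp only [Sum.elim_comp_inl, Sum.elim_comp_inr] at heq
  have hw : w = lam • u := by
    funext i
    have := congrFun heq (Sum.inl i)
    simpa [Matrix.zero_mulVec, Matrix.one_mulVec] using this
  have h2 : B *ᵥ u = d • u := by
    funext i
    have h2' := congrFun heq (Sum.inr i)
    simp only [Sum.elim_inr, Pi.add_apply, Pi.smul_apply, smul_eq_mul,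
      Matrix.smul_mulVec, Matrix.one_mulVec] at h2'
    rw [hw] at h2'
    simp only [Pi.smul_apply, smul_eq_mul] at h2'
    show (B *ᵥ u) i = d * u i
    rw [hd]
    linear_combination h2'
  have hu0 : u ≠ 0 := by
    intro h0
    apply hv0
    have hw0 : w = 0 := by rw [hw, h0, smul_zero]
    rw [hvelim, h0, hw0]
    funext x; cases x <;> rfl
  -- d is an eigenvalue of B; apply Gershgorin
  have hevB : Module.End.HasEigenvalue (Matrix.toLin' B) d :=
    Module.End.hasEigenvalue_of_hasEigenvector
      ⟨Module.End.mem_eigenspace_iff.mpr (by rw [Matrix.toLin'_apply]; exact h2), hu0⟩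
  obtain ⟨k, hk⟩ := eigenvalue_mem_ball hevB
  have hBkk : B k k = ((-2 / h ^ 2 : ℝ) : ℂ) := by
    rw [hBdef]
    simp only [Matrix.smul_apply, hA'def, Matrix.map_apply, hA k k, if_pos rfl, smul_eq_mul]
    push_cast
    ring
  have hrad : ∑ j ∈ Finset.univ.erase k, ‖B k j‖ ≤ 2 / h ^ 2 := by
    have hterm : ∀ j ∈ Finset.univ.erase k, ‖B k j‖ =
        (1 / h ^ 2) * (if (k : ℕ) + 1 = (j : ℕ) ∨ (j : ℕ) + 1 = (k : ℕ)
          then (1 : ℝ) else 0) := by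
      intro j hj
      have hjk : j ≠ k := (Finset.mem_erase.mp hj).1
      have hjk' : (k : ℕ) ≠ (j : ℕ) := fun hc => hjk (Fin.ext hc.symm)
      rw [hBdef]
      simp only [Matrix.smul_apply, hA'def, Matrix.map_apply, hA k j, if_neg hjk', smul_eq_mul]
      split_ifs with hcase
      · simp [norm_mul, Complex.norm_real, abs_of_pos (by positivity : (0:ℝ) < 1 / h ^ 2)]
      · simp
    rw [Finset.sum_congr rfl hterm, ← Finset.mul_sum]
    have hsum : (∑ j ∈ Finset.univ.erase k,
        (if (k : ℕ) + 1 = (j : ℕ) ∨ (j : ℕ) + 1 = (k : ℕ) then (1 : ℝ) else 0)) ≤ 2 := by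
      have hle : (∑ j ∈ Finset.univ.erase k,
          (if (k : ℕ) + 1 = (j : ℕ) ∨ (j : ℕ) + 1 = (k : ℕ) then (1 : ℝ) else 0)) ≤
          ∑ j : Fin (N - 1),
          (if (k : ℕ) + 1 = (j : ℕ) ∨ (j : ℕ) + 1 = (k : ℕ) then (1 : ℝ) else 0) := by
        apply Finset.sum_le_sum_of_subset_of_nonneg (Finset.erase_subset _ _)
        intro j _ _
        split_ifs <;> norm_num
      refine hle.trans ?_
      rw [Finset.sum_boole]
      have hcard : (Finset.univ.filter
          (fun j : Fin (N - 1) => (k : ℕ) + 1 = (j : ℕ) ∨ (j : ℕ) + 1 = (k : ℕ))).card ≤ 2 := by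
        have hsub : (Finset.univ.filter
            (fun j : Fin (N - 1) => (k : ℕ) + 1 = (j : ℕ) ∨ (j : ℕ) + 1 = (k : ℕ))) ⊆
            (Finset.univ.filter (fun j : Fin (N - 1) => (j : ℕ) = (k : ℕ) + 1)) ∪
            (Finset.univ.filter (fun j : Fin (N - 1) => (j : ℕ) + 1 = (k : ℕ))) := by
          intro j hj
          simp only [Finset.mem_filter, Finset.mem_union, Finset.mem_univ, true_and] at hj ⊢
          rcases hj with hc | hc
          · exact Or.inl hc.symm
          · exact Or.inr hc
        have c1 : (Finset.univ.filter (fun j : Fin (N - 1) => (j : ℕ) = (k : ℕ) + 1)).card ≤ 1 := by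
          apply Finset.card_le_one.mpr
          intro a ha b hb
          simp only [Finset.mem_filter, Finset.mem_univ, true_and] at ha hb
          exact Fin.ext (ha.trans hb.symm)
        have c2 : (Finset.univ.filter (fun j : Fin (N - 1) => (j : ℕ) + 1 = (k : ℕ))).card ≤ 1 := by
          apply Finset.card_le_one.mpr
          intro a ha b hb
          simp only [Finset.mem_filter, Finset.mem_univ, true_and] at ha hb
          exact Fin.ext (by omega)
        calc _ ≤ _ := Finset.card_le_card hsub
          _ ≤ _ := Finset.card_union_le _ _
          _ ≤ 2 := by omega
      calc ((Finset.univ.filter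
          (fun j : Fin (N - 1) => (k : ℕ) + 1 = (j : ℕ) ∨ (j : ℕ) + 1 = (k : ℕ))).card : ℝ)
          ≤ (2 : ℕ) := by exact_mod_cast hcard
        _ = 2 := by norm_num
    have hpos : (0 : ℝ) < 1 / h ^ 2 := by positivity
    calc (1 / h ^ 2) * _ ≤ (1 / h ^ 2) * 2 := by
          exact mul_le_mul_of_nonneg_left hsum hpos.le
      _ = 2 / h ^ 2 := by ring
  have hnorm : ‖d - B k k‖ ≤ 2 / h ^ 2 :=
    le_trans (mem_closedBall_iff_norm.mp hk) hrad
  have hRe : d.re ≤ 0 := by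
    have h1 : (d - B k k).re ≤ ‖d - B k k‖ := Complex.re_le_norm _
    rw [hBkk] at h1
    simp only [Complex.sub_re, Complex.ofReal_re] at h1
    rw [hBkk] at hnorm
    have h3 : d.re - (-2 / h ^ 2) ≤ 2 / h ^ 2 := le_trans h1 hnorm
    have h4 : (-2 : ℝ) / h ^ 2 = -(2 / h ^ 2) := by ring
    rw [h4] at h3
    linarith
  -- d is real
  have hHerm : Bᴴ = B := by
    rw [hBdef]
    ext i j
    simp only [Matrix.conjTranspose_apply, Matrix.smul_apply, hA'def, Matrix.map_apply,
      smul_eq_mul, star_mul', Complex.star_def, Complex.conj_ofReal]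
    rw [hsymm j i]
  have hs : star (star u ⬝ᵥ (B *ᵥ u)) = star u ⬝ᵥ (B *ᵥ u) := by
    conv_lhs => rw [Matrix.star_dotProduct, star_star]
    rw [Matrix.star_mulVec, hHerm, ← Matrix.dotProduct_mulVec]
  have ht : star u ⬝ᵥ u ≠ 0 := fun hc => hu0 (dotProduct_star_self_eq_zero.mp hc)
  have hts : star (star u ⬝ᵥ u) = star u ⬝ᵥ u := (Matrix.star_dotProduct u u).symm
  have hseq : star u ⬝ᵥ (B *ᵥ u) = d * (star u ⬝ᵥ u) := by
    rw [h2, dotProduct_smul, smul_eq_mul]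
  have hdreal : (starRingEnd ℂ) d = d := by
    have hthis := hs
    rw [hseq, star_mul, hts] at hthis
    rw [show d * (star u ⬝ᵥ u) = (star u ⬝ᵥ u) * d from mul_comm _ _] at hthis
    exact mul_left_cancel₀ ht hthis
  have hdim : d.im = 0 := Complex.conj_eq_iff_im.mp hdreal
  -- finish with real arithmetic
  have himval : d.im = 2 * lam.re * lam.im + γ * lam.im := by
    rw [hd]
    simp only [Complex.add_im, Complex.mul_im, Complex.ofReal_re, Complex.ofReal_im, pow_two]
    ring
  have hreval : d.re = lam.re ^ 2 - lam.im ^ 2 + γ * lam.re := by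
    rw [hd]
    simp only [Complex.add_re, Complex.mul_re, Complex.mul_im, Complex.ofReal_re,
      Complex.ofReal_im, pow_two]
    ring
  have him : lam.im * (2 * lam.re + γ) = 0 := by
    rw [himval] at hdim; linarith [hdim]
  have hre2 : lam.re ^ 2 - lam.im ^ 2 + γ * lam.re ≤ 0 := by
    rw [hreval] at hRe; linarith
  by_contra hpos
  push_neg at hpos
  have hb : lam.im = 0 := by
    rcases mul_eq_zero.mp him with hc | hc
    · exact hc
    · linarith
  nlinarith [hpos, hb, hre2, hγ]
end

section
/- Let N ≥ 2 be an integer, let A be the (N−1)×(N−1) real tridiagonal matrix with −2 on the diagonal and 1 on the sub- and super-diagonals, let h > 0, k > 0, γ ≥ 0 be real numbers, and let M be the (2N−2)×(2N−2) complex block matrix M = [[0, I],[(1/h²)A, −γ I]]. Then the matrix I − (k/2)M is invertible, and every eigenvalue μ of the amplification matrix (I − (k/2)M)⁻¹ (I + (k/2)M) satisfies |μ| ≤ 1. -/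
lemma aux_sum_ite_le {n : ℕ} (P : Fin n → Prop) [DecidablePred P]
    (hP : ∀ a b, P a → P b → a = b) (c : ℝ) (hc : 0 ≤ c) :
    (∑ j : Fin n, if P j then c else 0) ≤ c := by
  rw [Finset.sum_ite, Finset.sum_const, Finset.sum_const, smul_zero, add_zero, nsmul_eq_mul]
  have hcard : (Finset.univ.filter P).card ≤ 1 := by
    apply Finset.card_le_one.mpr
    intro a ha b hb
    exact hP a b (Finset.mem_filter.mp ha).2 (Finset.mem_filter.mp hb).2
  have : ((Finset.univ.filter P).card : ℝ) ≤ 1 := by exact_mod_cast hcard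
  nlinarith

lemma aux_re_conj_mul_le (a b : ℂ) :
    ((starRingEnd ℂ) a * b).re ≤ (Complex.normSq a + Complex.normSq b) / 2 := by
  simp [Complex.mul_re, Complex.normSq_apply]
  nlinarith [sq_nonneg (a.re - b.re), sq_nonneg (a.im - b.im)]

lemma aux_eigA {n : ℕ} (B : Matrix (Fin n) (Fin n) ℂ)
    (hB : ∀ i j : Fin n, B i j = if (i : ℕ) = (j : ℕ) then (-2 : ℂ)
      else if (i : ℕ) + 1 = (j : ℕ) ∨ (j : ℕ) + 1 = (i : ℕ) then 1 else 0)
    (u : Fin n → ℂ) (hu : u ≠ 0) (c : ℂ) (huc : B.mulVec u = c • u) :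
    c.im = 0 ∧ c.re ≤ 0 := by
  classical
  set T : ℝ := ∑ i, Complex.normSq (u i) with hT
  have hTpos : 0 < T := by
    obtain ⟨i, hi⟩ : ∃ i, u i ≠ 0 := by
      by_contra hcon
      push_neg at hcon
      exact hu (funext hcon)
    apply Finset.sum_pos' (fun j _ => Complex.normSq_nonneg _)
    exact ⟨i, Finset.mem_univ i, Complex.normSq_pos.mpr hi⟩
  set q : ℂ := ∑ i, (starRingEnd ℂ) (u i) * (B.mulVec u i) with hq
  have hqcT : q = c * (T : ℂ) := by
    rw [hq, huc]
    push_cast [hT, Finset.mul_sum]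
    refine Finset.sum_congr rfl fun i _ => ?_
    rw [Pi.smul_apply, smul_eq_mul, Complex.normSq_eq_conj_mul_self]
    ring
  have hexp : q = ∑ i, ∑ j, (starRingEnd ℂ) (u i) * (B i j * u j) := by
    rw [hq]
    refine Finset.sum_congr rfl fun i _ => ?_
    rw [Matrix.mulVec, dotProduct, Finset.mul_sum]
  set q2 : ℂ := ∑ i : Fin n, ∑ j : Fin n,
      (if (i : ℕ) + 1 = (j : ℕ) then (starRingEnd ℂ) (u i) * u j else 0) with hq2
  have hsplit : q = -2 * (T : ℂ) + (q2 + (starRingEnd ℂ) q2) := by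
    have hBij : ∀ i j : Fin n, B i j =
        (if (i : ℕ) = (j : ℕ) then (-2 : ℂ) else 0)
          + (if (i : ℕ) + 1 = (j : ℕ) then 1 else 0)
          + (if (j : ℕ) + 1 = (i : ℕ) then 1 else 0) := by
      intro i j
      rw [hB]
      split_ifs <;> first | (exfalso; omega) | norm_num
    have hconj : (starRingEnd ℂ) q2 = ∑ i : Fin n, ∑ j : Fin n,
        (if (j : ℕ) + 1 = (i : ℕ) then (starRingEnd ℂ) (u i) * u j else 0) := by
      rw [hq2, map_sum, Finset.sum_comm]
      refine Finset.sum_congr rfl fun i _ => ?_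
      rw [map_sum]
      refine Finset.sum_congr rfl fun j _ => ?_
      rw [apply_ite (starRingEnd ℂ)]
      simp [mul_comm]
    have hTsum : (-2 : ℂ) * (T : ℂ) = ∑ i : Fin n, ∑ j : Fin n,
        (if (i : ℕ) = (j : ℕ) then (-2 : ℂ) * ((starRingEnd ℂ) (u i) * u j) else 0) := by
      rw [hT]
      push_cast [Finset.mul_sum]
      refine Finset.sum_congr rfl fun i _ => ?_
      simp only [Fin.val_eq_val]
      rw [Finset.sum_ite_eq, if_pos (Finset.mem_univ i), Complex.normSq_eq_conj_mul_self]
      try ring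
    have hstep : q = ∑ i : Fin n, ∑ j : Fin n,
        ((if (i : ℕ) = (j : ℕ) then (-2 : ℂ) * ((starRingEnd ℂ) (u i) * u j) else 0)
          + ((if (i : ℕ) + 1 = (j : ℕ) then (starRingEnd ℂ) (u i) * u j else 0)
            + (if (j : ℕ) + 1 = (i : ℕ) then (starRingEnd ℂ) (u i) * u j else 0))) := by
      rw [hexp]
      refine Finset.sum_congr rfl fun i _ => Finset.sum_congr rfl fun j _ => ?_
      rw [hBij]
      split_ifs <;> ring
    rw [hstep]
    simp only [Finset.sum_add_distrib]
    rw [← hTsum, hconj, hq2]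
  have him : q.im = 0 := by
    rw [hsplit]
    simp [Complex.add_im, Complex.conj_im]
  have hq2re : q2.re ≤ T := by
    have hre : q2.re = ∑ i : Fin n, ∑ j : Fin n,
        (if (i : ℕ) + 1 = (j : ℕ) then ((starRingEnd ℂ) (u i) * u j).re else 0) := by
      rw [hq2, Complex.re_sum]
      refine Finset.sum_congr rfl fun i _ => ?_
      rw [Complex.re_sum]
      refine Finset.sum_congr rfl fun j _ => ?_
      rw [apply_ite Complex.re, Complex.zero_re]
    rw [hre]
    have hbound : ∑ i : Fin n, ∑ j : Fin n,
        (if (i : ℕ) + 1 = (j : ℕ) then ((starRingEnd ℂ) (u i) * u j).re else 0)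
        ≤ ∑ i : Fin n, ∑ j : Fin n,
        ((if (i : ℕ) + 1 = (j : ℕ) then Complex.normSq (u i) / 2 else 0)
          + (if (i : ℕ) + 1 = (j : ℕ) then Complex.normSq (u j) / 2 else 0)) := by
      refine Finset.sum_le_sum fun i _ => Finset.sum_le_sum fun j _ => ?_
      split_ifs with hc1
      · have := aux_re_conj_mul_le (u i) (u j); linarith
      · norm_num
    refine hbound.trans ?_
    simp only [Finset.sum_add_distrib]
    have h1 : ∑ i : Fin n, ∑ j : Fin n,
        (if (i : ℕ) + 1 = (j : ℕ) then Complex.normSq (u i) / 2 else 0) ≤ T / 2 := by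
      rw [hT, Finset.sum_div]
      refine Finset.sum_le_sum fun i _ => ?_
      exact aux_sum_ite_le _ (fun a b ha hb => by
        apply Fin.ext; omega) _ (div_nonneg (Complex.normSq_nonneg _) (by norm_num))
    have h2 : ∑ i : Fin n, ∑ j : Fin n,
        (if (i : ℕ) + 1 = (j : ℕ) then Complex.normSq (u j) / 2 else 0) ≤ T / 2 := by
      rw [Finset.sum_comm, hT, Finset.sum_div]
      refine Finset.sum_le_sum fun j _ => ?_
      exact aux_sum_ite_le (fun i => (i : ℕ) + 1 = (j : ℕ)) (fun a b ha hb => by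
        apply Fin.ext; omega) _ (div_nonneg (Complex.normSq_nonneg _) (by norm_num))
    linarith
  have hqre : q.re ≤ 0 := by
    have hqre' : q.re = -2 * T + (q2.re + q2.re) := by
      rw [hsplit]
      simp [Complex.add_re, Complex.conj_re, Complex.mul_re]
    rw [hqre']
    linarith
  constructor
  · have : (c * (T : ℂ)).im = c.im * T := by
      simp [Complex.mul_im]
    rw [hqcT] at him
    rw [this] at him
    exact (mul_eq_zero.mp him).resolve_right (by positivity)
  · have : (c * (T : ℂ)).re = c.re * T := by
      simp [Complex.mul_re]
    rw [hqcT, this] at hqre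
    nlinarith
/-- Proposition 3.3 (unconditional stability of the implicit FD-(1,1) scheme,
constant damping): for every `h, k > 0` and `γ ≥ 0`, the matrix `I − (k/2)M`
is invertible and every eigenvalue `μ` of the amplification matrix
`(I − (k/2)M)⁻¹(I + (k/2)M)` satisfies `|μ| ≤ 1`. -/
theorem implicit_scheme_unconditionally_stable (N : ℕ) (hN : 2 ≤ N)
    (A : Matrix (Fin (N - 1)) (Fin (N - 1)) ℝ)
    (hA : ∀ i j : Fin (N - 1),
      A i j =
        if (i : ℕ) = (j : ℕ) then -2
        else if (i : ℕ) + 1 = (j : ℕ) ∨ (j : ℕ) + 1 = (i : ℕ) then 1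
        else 0)
    (h k γ : ℝ) (hh : 0 < h) (hk : 0 < k) (hγ : 0 ≤ γ)
    (M : Matrix (Fin (N - 1) ⊕ Fin (N - 1)) (Fin (N - 1) ⊕ Fin (N - 1)) ℂ)
    (hM : M = Matrix.fromBlocks 0 1
      (((1 / h ^ 2 : ℝ) : ℂ) • A.map (fun x => (x : ℂ))) (-(γ : ℂ) • 1)) :
    IsUnit ((1 : Matrix (Fin (N - 1) ⊕ Fin (N - 1))
        (Fin (N - 1) ⊕ Fin (N - 1)) ℂ) - ((k / 2 : ℝ) : ℂ) • M) ∧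
      ∀ μ ∈ spectrum ℂ
          (((1 : Matrix (Fin (N - 1) ⊕ Fin (N - 1))
              (Fin (N - 1) ⊕ Fin (N - 1)) ℂ) - ((k / 2 : ℝ) : ℂ) • M)⁻¹ *
            ((1 : Matrix (Fin (N - 1) ⊕ Fin (N - 1))
              (Fin (N - 1) ⊕ Fin (N - 1)) ℂ) + ((k / 2 : ℝ) : ℂ) • M)),
        ‖μ‖ ≤ 1 := by
  classical
  have hh2 : (0 : ℝ) < h ^ 2 := by positivity
  set Bc : Matrix (Fin (N - 1)) (Fin (N - 1)) ℂ := A.map (fun x => (x : ℂ)) with hBcdef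
  have hBc : ∀ i j : Fin (N - 1), Bc i j = if (i : ℕ) = (j : ℕ) then (-2 : ℂ)
      else if (i : ℕ) + 1 = (j : ℕ) ∨ (j : ℕ) + 1 = (i : ℕ) then 1 else 0 := by
    intro i j
    rw [hBcdef, Matrix.map_apply, hA]
    split_ifs <;> norm_num
  -- Key fact: every eigenvalue of M has nonpositive real part.
  have key : ∀ (lam : ℂ) (x : Fin (N - 1) ⊕ Fin (N - 1) → ℂ), x ≠ 0 →
      M.mulVec x = lam • x → lam.re ≤ 0 := by
    intro lam x hx hMx
    set u : Fin (N - 1) → ℂ := fun i => x (Sum.inl i) with hu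
    set v : Fin (N - 1) → ℂ := fun i => x (Sum.inr i) with hv
    have htop : ∀ i, v i = lam * u i := by
      intro i
      have h1 := congrFun hMx (Sum.inl i)
      rw [hM] at h1
      simpa [Matrix.mulVec, dotProduct, Fintype.sum_sum_type,
        Matrix.fromBlocks_apply₁₁, Matrix.fromBlocks_apply₁₂,
        Matrix.one_apply, ite_mul, one_mul, zero_mul,
        Finset.sum_ite_eq, hu, hv] using h1
    have hbot : ∀ i, ((1 / h ^ 2 : ℝ) : ℂ) * (∑ j, Bc i j * u j) - (γ : ℂ) * v i
        = lam * v i := by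
      intro i
      have h1 := congrFun hMx (Sum.inr i)
      rw [hM] at h1
      simpa [Matrix.mulVec, dotProduct, Fintype.sum_sum_type,
        Matrix.fromBlocks_apply₂₁, Matrix.fromBlocks_apply₂₂,
        Matrix.one_apply, Matrix.smul_apply, smul_eq_mul, ite_mul, one_mul, zero_mul,
        mul_ite, mul_zero, Finset.sum_ite_eq, Finset.mul_sum, mul_assoc,
        sub_eq_add_neg, hu, hv] using h1
    have hune : u ≠ 0 := by
      intro hu0
      apply hx
      funext z
      cases z with
      | inl i => exact congrFun hu0 i
      | inr i =>
        have := htop i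
        rw [congrFun hu0 i] at this
        simpa using this
    set c : ℂ := ((h ^ 2 : ℝ) : ℂ) * (lam ^ 2 + (γ : ℂ) * lam) with hcdef
    have hceq : Bc.mulVec u = c • u := by
      funext i
      have h1 := hbot i
      rw [htop i] at h1
      have h2 : Bc.mulVec u i = ∑ j, Bc i j * u j := by
        rw [Matrix.mulVec, dotProduct]
      rw [Pi.smul_apply, smul_eq_mul, h2, hcdef]
      have hcast1 : ((1 / h ^ 2 : ℝ) : ℂ) * ((h ^ 2 : ℝ) : ℂ) = 1 := by
        rw [← Complex.ofReal_mul]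
        rw [one_div, inv_mul_cancel₀ (ne_of_gt hh2)]
        exact Complex.ofReal_one
      linear_combination ((h ^ 2 : ℝ) : ℂ) * h1 - (∑ j, Bc i j * u j) * hcast1
    obtain ⟨him, hre⟩ := aux_eigA Bc hBc u hune c hceq
    have e1 : c.im = h ^ 2 * (2 * (lam.re * lam.im) + γ * lam.im) := by
      rw [hcdef]
      simp only [pow_two, Complex.mul_im, Complex.mul_re, Complex.add_im,
        Complex.add_re, Complex.ofReal_re, Complex.ofReal_im]
      ring
    have e2 : c.re = h ^ 2 * (lam.re ^ 2 - lam.im ^ 2 + γ * lam.re) := by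
      rw [hcdef]
      simp only [pow_two, Complex.mul_im, Complex.mul_re, Complex.add_im,
        Complex.add_re, Complex.ofReal_re, Complex.ofReal_im]
      ring
    rw [e1] at him
    rw [e2] at hre
    by_contra hpos
    push_neg at hpos
    have hb0 : lam.im = 0 := by
      have h3 : 2 * (lam.re * lam.im) + γ * lam.im = 0 :=
        (mul_eq_zero.mp him).resolve_left (ne_of_gt hh2)
      have h4 : lam.im * (2 * lam.re + γ) = 0 := by linear_combination h3
      rcases mul_eq_zero.mp h4 with h5 | h5
      · exact h5
      · exfalso; nlinarith
    have h5 : lam.re ^ 2 - lam.im ^ 2 + γ * lam.re ≤ 0 := by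
      by_contra h6
      push_neg at h6
      nlinarith
    rw [hb0] at h5
    nlinarith
  -- Part 1: invertibility
  have hUnit : IsUnit ((1 : Matrix (Fin (N - 1) ⊕ Fin (N - 1))
      (Fin (N - 1) ⊕ Fin (N - 1)) ℂ) - ((k / 2 : ℝ) : ℂ) • M) := by
    rw [Matrix.isUnit_iff_isUnit_det, isUnit_iff_ne_zero]
    intro hdet
    obtain ⟨x, hx0, hx⟩ := Matrix.exists_mulVec_eq_zero_iff.mpr hdet
    have hks : ((k / 2 : ℝ) : ℂ) ≠ 0 := by
      simp only [ne_eq, Complex.ofReal_eq_zero]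
      positivity
    have hxM : M.mulVec x = ((2 / k : ℝ) : ℂ) • x := by
      rw [Matrix.sub_mulVec, Matrix.one_mulVec, Matrix.smul_mulVec,
        sub_eq_zero] at hx
      funext i
      have h1 := congrFun hx i
      rw [Pi.smul_apply, smul_eq_mul] at h1
      rw [Pi.smul_apply, smul_eq_mul]
      have hkc : ((2 / k : ℝ) : ℂ) * ((k / 2 : ℝ) : ℂ) = 1 := by
        rw [← Complex.ofReal_mul]
        have hx1 : (2 / k) * (k / 2) = (1 : ℝ) := by field_simp
        rw [hx1, Complex.ofReal_one]
      calc M.mulVec x i = (((2 / k : ℝ) : ℂ) * ((k / 2 : ℝ) : ℂ)) * M.mulVec x i := by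
            rw [hkc, one_mul]
        _ = ((2 / k : ℝ) : ℂ) * (((k / 2 : ℝ) : ℂ) * M.mulVec x i) := by ring
        _ = ((2 / k : ℝ) : ℂ) * x i := by rw [h1]
    have h2 := key _ x hx0 hxM
    rw [Complex.ofReal_re] at h2
    have : (0 : ℝ) < 2 / k := by positivity
    linarith
  refine ⟨hUnit, ?_⟩
  -- Part 2: spectral bound
  intro μ hμ
  by_cases hm1 : μ = -1
  · rw [hm1]
    simp
  rw [spectrum.mem_iff] at hμ
  have hdet0 : ((algebraMap ℂ (Matrix (Fin (N - 1) ⊕ Fin (N - 1))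
      (Fin (N - 1) ⊕ Fin (N - 1)) ℂ) μ) -
      (((1 : Matrix (Fin (N - 1) ⊕ Fin (N - 1)) (Fin (N - 1) ⊕ Fin (N - 1)) ℂ)
        - ((k / 2 : ℝ) : ℂ) • M)⁻¹ *
       ((1 : Matrix (Fin (N - 1) ⊕ Fin (N - 1)) (Fin (N - 1) ⊕ Fin (N - 1)) ℂ)
        + ((k / 2 : ℝ) : ℂ) • M))).det = 0 := by
    by_contra hd
    exact hμ ((Matrix.isUnit_iff_isUnit_det _).mpr (isUnit_iff_ne_zero.mpr hd))
  obtain ⟨x, hx0, hx⟩ := Matrix.exists_mulVec_eq_zero_iff.mpr hdet0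
  have hTx : (((1 : Matrix (Fin (N - 1) ⊕ Fin (N - 1)) (Fin (N - 1) ⊕ Fin (N - 1)) ℂ)
        - ((k / 2 : ℝ) : ℂ) • M)⁻¹ *
       ((1 : Matrix (Fin (N - 1) ⊕ Fin (N - 1)) (Fin (N - 1) ⊕ Fin (N - 1)) ℂ)
        + ((k / 2 : ℝ) : ℂ) • M)).mulVec x = μ • x := by
    rw [Matrix.sub_mulVec] at hx
    rw [Algebra.algebraMap_eq_smul_one, Matrix.smul_mulVec,
      Matrix.one_mulVec, sub_eq_zero] at hx
    exact hx.symm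
  have hdetB := (Matrix.isUnit_iff_isUnit_det _).mp hUnit
  have hCx : ((1 : Matrix (Fin (N - 1) ⊕ Fin (N - 1)) (Fin (N - 1) ⊕ Fin (N - 1)) ℂ)
        + ((k / 2 : ℝ) : ℂ) • M).mulVec x
      = μ • (((1 : Matrix (Fin (N - 1) ⊕ Fin (N - 1)) (Fin (N - 1) ⊕ Fin (N - 1)) ℂ)
        - ((k / 2 : ℝ) : ℂ) • M).mulVec x) := by
    have hBT : ((1 : Matrix (Fin (N - 1) ⊕ Fin (N - 1)) (Fin (N - 1) ⊕ Fin (N - 1)) ℂ)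
          - ((k / 2 : ℝ) : ℂ) • M) *
        (((1 : Matrix (Fin (N - 1) ⊕ Fin (N - 1)) (Fin (N - 1) ⊕ Fin (N - 1)) ℂ)
          - ((k / 2 : ℝ) : ℂ) • M)⁻¹ *
         ((1 : Matrix (Fin (N - 1) ⊕ Fin (N - 1)) (Fin (N - 1) ⊕ Fin (N - 1)) ℂ)
          + ((k / 2 : ℝ) : ℂ) • M))
        = ((1 : Matrix (Fin (N - 1) ⊕ Fin (N - 1)) (Fin (N - 1) ⊕ Fin (N - 1)) ℂ)
          + ((k / 2 : ℝ) : ℂ) • M) := by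
      rw [← mul_assoc, Matrix.mul_nonsing_inv _ hdetB, one_mul]
    have hsplit1 := Matrix.mulVec_mulVec x
      ((1 : Matrix (Fin (N - 1) ⊕ Fin (N - 1)) (Fin (N - 1) ⊕ Fin (N - 1)) ℂ)
        - ((k / 2 : ℝ) : ℂ) • M)
      (((1 : Matrix (Fin (N - 1) ⊕ Fin (N - 1)) (Fin (N - 1) ⊕ Fin (N - 1)) ℂ)
        - ((k / 2 : ℝ) : ℂ) • M)⁻¹ *
       ((1 : Matrix (Fin (N - 1) ⊕ Fin (N - 1)) (Fin (N - 1) ⊕ Fin (N - 1)) ℂ)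
        + ((k / 2 : ℝ) : ℂ) • M))
    rw [hTx, hBT, Matrix.mulVec_smul] at hsplit1
    exact hsplit1.symm
  have hmu1 : (1 : ℂ) + μ ≠ 0 := by
    intro hcon
    exact hm1 (by linear_combination hcon)
  have hks : ((k / 2 : ℝ) : ℂ) ≠ 0 := by
    simp only [ne_eq, Complex.ofReal_eq_zero]
    positivity
  set lam : ℂ := (μ - 1) / (((k / 2 : ℝ) : ℂ) * (1 + μ)) with hlam
  have hMx : M.mulVec x = lam • x := by
    funext i
    have h6 := congrFun hCx i
    simp only [Matrix.add_mulVec, Matrix.sub_mulVec, Matrix.one_mulVec,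
      Matrix.smul_mulVec, Pi.add_apply, Pi.sub_apply, Pi.smul_apply,
      smul_eq_mul] at h6
    rw [Pi.smul_apply, smul_eq_mul, hlam]
    have hkne : (k : ℂ) ≠ 0 := by exact_mod_cast ne_of_gt hk
    have hden : μ * (k : ℂ) + (k : ℂ) ≠ 0 := by
      have he : μ * (k : ℂ) + (k : ℂ) = (k : ℂ) * (1 + μ) := by ring
      rw [he]
      exact mul_ne_zero hkne hmu1
    have h7 : (k : ℂ) * (1 + μ) * M.mulVec x i = 2 * (μ - 1) * x i := by
      push_cast at h6
      linear_combination 2 * h6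
    push_cast
    field_simp [hmu1, hkne, hden]
    linear_combination h7
  have hre := key lam x hx0 hMx
  -- rewrite lam as (2/k) * ((μ-1)/(1+μ))
  have hkne : (k : ℂ) ≠ 0 := by exact_mod_cast ne_of_gt hk
  have hlam2 : lam = ((2 / k : ℝ) : ℂ) * ((μ - 1) / (1 + μ)) := by
    rw [hlam]
    push_cast
    field_simp
  have htre : ((μ - 1) / (1 + μ)).re ≤ 0 := by
    have h8 : lam.re = (2 / k) * ((μ - 1) / (1 + μ)).re := by
      rw [hlam2]
      simp [Complex.mul_re, Complex.ofReal_re, Complex.ofReal_im]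
    rw [h8] at hre
    have h2k : (0 : ℝ) < 2 / k := by positivity
    nlinarith
  have hw : 0 < Complex.normSq (1 + μ) := Complex.normSq_pos.mpr hmu1
  have hnum : (μ.re - 1) * (1 + μ.re) + μ.im * μ.im ≤ 0 := by
    rw [Complex.div_re] at htre
    simp only [Complex.sub_re, Complex.sub_im, Complex.one_re, Complex.one_im,
      Complex.add_re, Complex.add_im] at htre
    rw [← add_div, div_nonpos_iff] at htre
    rcases htre with ⟨h9, h10⟩ | ⟨h9, h10⟩
    · linarith
    · linarith
  have hnormSq : Complex.normSq μ ≤ 1 := by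
    rw [Complex.normSq_apply]
    nlinarith
  have habs2 : (‖μ‖) ^ 2 ≤ 1 := by
    rw [Complex.sq_norm]
    exact hnormSq
  nlinarith [norm_nonneg μ]
end
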